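/- Let f be a defective probability generating function with smallest fixed point q and gamma = f'(q) > 0, and let H be the limit function H(s) = prod_{j=0}^infty h(f(j,s)) with h(s) = (f(s)-q)/((s-q)gamma), h(q)=1. Then gamma^{-t} * (f(t,1) - f(t,0)) converges, as t tends to infinity, to q*H(0) + (1-q)*H(1); probabilistically, gamma^{-t} P(T > t) converges to q*H(0) + (1-q)*H(1), where T is the absorption time of the defective Galton-Watson process with reproduction law f, for which P(T > t) = f(t,1) - f(t,0). -/

import Mathlib

open Filter Finset

/-- Relation (5): for a defective pgf `f` with smallest fixed point `q` and
`γ = f'(q) > 0`, `γ^{-t} P(T > t) = (f^[t] 1 - f^[t] 0)/γ^t → q H(0) + (1-q) H(1)`,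
where `H s = ∏_{j≥0} h(f^[j] s)`. -/
theorem stmt_2
    (p : ℕ → ℝ) (ε : ℝ) (f : ℝ → ℝ) (q γ : ℝ) (h H : ℝ → ℝ)
    (hp : ∀ k, 0 ≤ p k) (hε : ε ∈ Set.Ioo (0 : ℝ) 1)
    (hsum : HasSum p (1 - ε))
    (hf : ∀ s : ℝ, f s = ∑' k, p k * s ^ k)
    (hq : q ∈ Set.Ico (0 : ℝ) 1) (hfix : f q = q)
    (hqmin : ∀ x ∈ Set.Icc (0 : ℝ) 1, f x = x → q ≤ x)
    (hγ : γ = deriv f q) (hγpos : 0 < γ)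
    (hh : ∀ s : ℝ, s ≠ q → h s = (f s - q) / ((s - q) * γ))
    (hhq : h q = 1)
    (hH : ∀ s ∈ Set.Icc (0 : ℝ) 1,
        Tendsto (fun t : ℕ => ∏ j ∈ range t, h (f^[j] s)) atTop (nhds (H s))) :
    Tendsto (fun t : ℕ => (f^[t] 1 - f^[t] 0) / γ ^ t) atTop
      (nhds (q * H 0 + (1 - q) * H 1)) := by
  have hγne : γ ≠ 0 := ne_of_gt hγpos
  -- key fact: f x - q = γ * h x * (x - q)
  have key : ∀ x : ℝ, f x - q = γ * h x * (x - q) := by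
    intro x
    by_cases hx : x = q
    · simp [hx, hfix]
    · rw [hh x hx]
      have : (x - q) ≠ 0 := sub_ne_zero.mpr hx
      field_simp
  have main : ∀ (s : ℝ) (t : ℕ),
      f^[t] s - q = γ ^ t * (s - q) * ∏ j ∈ range t, h (f^[j] s) := by
    intro s t
    induction t with
    | zero => simp
    | succ t ih =>
      rw [Function.iterate_succ_apply', key, ih, prod_range_succ, pow_succ]
      ring
  have h0 := hH 0 (by constructor <;> norm_num)
  have h1 := hH 1 (by constructor <;> norm_num)
  have := ((h0.const_mul q).add (h1.const_mul (1 - q)))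
  refine this.congr fun t => ?_
  rw [eq_div_iff (pow_ne_zero t hγne)]
  linear_combination main 0 t - main 1 t
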